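/- Let V ≥ 1 be an integer, γ > 0, σ₀ > 0, σ > 0 reals, and y ∈ ℝ^{1+2V} an arbitrary observation vector. Let K be the (1+2V)×(1+2V) Gram matrix of the one-dimensional VQE kernel at the equidistant angles α_w = 2πw/(1+2V), and for a test angle α' ∈ ℝ let k' ∈ ℝ^{1+2V} have entries k'_w = σ₀²·(γ² + 2·∑_{v=1}^{V} cos(v·(α_w − α')))/(γ² + 2V). Then with ε = σ²/σ₀², the GP posterior mean μ(α') = k'ᵀ·(K + σ²·I)⁻¹·y satisfies μ(α') = η₀ + ∑_{v=1}^{V} ( η_{cos,v}·√2·cos(v·α') + η_{sin,v}·√2·sin(v·α') ), where η₀ = ( γ² / ( (γ² + 2V)·ε + (1+2V)·γ² ) )·∑_{w=0}^{2V} y_w, η_{cos,v} = ( 1 / ( (γ² + 2V)·ε + 1 + 2V ) )·∑_{w=0}^{2V} y_w·√2·cos( 2π·v·w/(1+2V) ), and η_{sin,v} = ( 1 / ( (γ² + 2V)·ε + 1 + 2V ) )·∑_{w=0}^{2V} y_w·√2·sin( 2π·v·w/(1+2V) ). -/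

import Mathlib

set_option maxHeartbeats 1000000
open Real Finset Matrix

lemma two_cos_sin (a b : ℝ) :
    2 * Real.cos a * Real.sin b = Real.sin (a + b) - Real.sin (a - b) := by
  rw [Real.sin_add, Real.sin_sub]; ring

lemma sum_cos_mul (x : ℝ) (V : ℕ) :
    (∑ v ∈ Finset.Icc 1 V, 2 * Real.cos ((v : ℝ) * x)) * Real.sin (x / 2)
      = Real.sin ((2 * V + 1) * x / 2) - Real.sin (x / 2) := by
  induction V with
  | zero => simp
  | succ V ih =>
    rw [Finset.sum_Icc_succ_top (by omega), add_mul, ih]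
    have h := two_cos_sin (((V : ℝ) + 1) * x) (x / 2)
    rw [show ((V : ℝ) + 1) * x + x / 2 = (2 * ((V : ℝ) + 1) + 1) * x / 2 by ring,
        show ((V : ℝ) + 1) * x - x / 2 = (2 * (V : ℝ) + 1) * x / 2 by ring] at h
    push_cast
    push_cast at h
    linarith

lemma sum_cos_range (a d : ℝ) (n : ℕ) :
    (∑ w ∈ Finset.range n, Real.cos (a + (w : ℝ) * d)) * (2 * Real.sin (d / 2))
      = Real.sin (a + (n : ℝ) * d - d / 2) - Real.sin (a - d / 2) := by
  induction n with
  | zero => simp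
  | succ n ih =>
    rw [Finset.sum_range_succ, add_mul, ih]
    have h := two_cos_sin (a + (n : ℝ) * d) (d / 2)
    push_cast
    rw [show a + ((n : ℝ) + 1) * d - d / 2 = a + (n : ℝ) * d + d / 2 by ring]
    linarith

lemma sin_ne_zero_of_frac (t : ℝ) (ht0 : t ≠ 0) (ht1 : -1 < t) (ht2 : t < 1) :
    Real.sin (t * Real.pi) ≠ 0 := by
  have hπ := Real.pi_pos
  rcases lt_trichotomy t 0 with h | h | h
  · have hp : 0 < Real.sin (-(t * Real.pi)) := by
      apply Real.sin_pos_of_pos_of_lt_pi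
      · nlinarith
      · nlinarith
    rw [Real.sin_neg] at hp; linarith
  · exact absurd h ht0
  · have hp : 0 < Real.sin (t * Real.pi) := by
      apply Real.sin_pos_of_pos_of_lt_pi
      · nlinarith
      · nlinarith
    linarith

lemma cos_sum_delta (V : ℕ) (w w' : Fin (1 + 2 * V)) :
    ∑ v ∈ Finset.Icc 1 V, Real.cos ((v : ℝ) *
       (2 * Real.pi * ((w : ℕ) : ℝ) / (1 + 2 * (V : ℝ)) -
        2 * Real.pi * ((w' : ℕ) : ℝ) / (1 + 2 * (V : ℝ))))
     = if w = w' then (V : ℝ) else -(1 / 2) := by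
  have hnR : (0 : ℝ) < 1 + 2 * (V : ℝ) := by positivity
  by_cases h : w = w'
  · subst h
    simp [sub_self]
  · rw [if_neg h]
    set x : ℝ := 2 * Real.pi * ((w : ℕ) : ℝ) / (1 + 2 * (V : ℝ)) -
        2 * Real.pi * ((w' : ℕ) : ℝ) / (1 + 2 * (V : ℝ)) with hx
    have hS := sum_cos_mul x V
    have hint : (2 * (V : ℝ) + 1) * x / 2 =
        ((((w : ℕ) : ℤ) - ((w' : ℕ) : ℤ) : ℤ) : ℝ) * Real.pi := by
      rw [hx]; push_cast; field_simp; ring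
    have hz : Real.sin ((2 * (V : ℝ) + 1) * x / 2) = 0 := by
      rw [hint]; exact Real.sin_int_mul_pi _
    have habn : ((w : ℕ) : ℝ) ≠ ((w' : ℕ) : ℝ) := by
      have : (w : ℕ) ≠ (w' : ℕ) := fun hc => h (Fin.ext hc)
      exact_mod_cast this
    set t : ℝ := (((w : ℕ) : ℝ) - ((w' : ℕ) : ℝ)) / (1 + 2 * (V : ℝ)) with hT
    have hx2 : x / 2 = t * Real.pi := by rw [hx, hT]; field_simp
    have hw1 : ((w : ℕ) : ℝ) < 1 + 2 * (V : ℝ) := by exact_mod_cast (by exact_mod_cast w.isLt : ((w : ℕ) : ℝ) < ((1 + 2 * V : ℕ) : ℝ))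
    have hw2 : ((w' : ℕ) : ℝ) < 1 + 2 * (V : ℝ) := by exact_mod_cast (by exact_mod_cast w'.isLt : ((w' : ℕ) : ℝ) < ((1 + 2 * V : ℕ) : ℝ))
    have hw3 : (0 : ℝ) ≤ ((w : ℕ) : ℝ) := Nat.cast_nonneg _
    have hw4 : (0 : ℝ) ≤ ((w' : ℕ) : ℝ) := Nat.cast_nonneg _
    have hts : Real.sin (x / 2) ≠ 0 := by
      rw [hx2]
      apply sin_ne_zero_of_frac
      · exact div_ne_zero (sub_ne_zero.mpr habn) (ne_of_gt hnR)
      · rw [hT, lt_div_iff₀ hnR]; linarith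
      · rw [hT, div_lt_iff₀ hnR]; linarith
    rw [hz] at hS
    have hsum1 : (∑ v ∈ Finset.Icc 1 V, 2 * Real.cos ((v : ℝ) * x)) = -1 := by
      have h0 : ((∑ v ∈ Finset.Icc 1 V, 2 * Real.cos ((v : ℝ) * x)) + 1) * Real.sin (x / 2) = 0 := by
        rw [add_mul, hS]; ring
      rcases mul_eq_zero.mp h0 with h1 | h1
      · linarith
      · exact absurd h1 hts
    have h2 : (∑ v ∈ Finset.Icc 1 V, 2 * Real.cos ((v : ℝ) * x)) =
        2 * ∑ v ∈ Finset.Icc 1 V, Real.cos ((v : ℝ) * x) := by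
      rw [Finset.mul_sum]
    rw [h2] at hsum1
    linarith

lemma cos_sum_zero (V v : ℕ) (hv1 : 1 ≤ v) (hv2 : v ≤ V) (α' : ℝ) :
    ∑ w : Fin (1 + 2 * V),
        Real.cos ((v : ℝ) * (2 * Real.pi * ((w : ℕ) : ℝ) / (1 + 2 * (V : ℝ)) - α')) = 0 := by
  have hπ := Real.pi_pos
  have hnR : (0 : ℝ) < 1 + 2 * (V : ℝ) := by positivity
  set a : ℝ := -(v : ℝ) * α' with ha
  set d : ℝ := 2 * Real.pi * (v : ℝ) / (1 + 2 * (V : ℝ)) with hd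
  have key := sum_cos_range a d (1 + 2 * V)
  have harg : ∀ i : ℕ, (v : ℝ) * (2 * Real.pi * (i : ℝ) / (1 + 2 * (V : ℝ)) - α')
      = a + (i : ℝ) * d := by
    intro i; rw [ha, hd]; field_simp; ring
  have hstep : ∑ w : Fin (1 + 2 * V),
      Real.cos ((v : ℝ) * (2 * Real.pi * ((w : ℕ) : ℝ) / (1 + 2 * (V : ℝ)) - α'))
      = ∑ i ∈ Finset.range (1 + 2 * V), Real.cos (a + (i : ℝ) * d) := by
    rw [Fin.sum_univ_eq_sum_range (fun i => Real.cos ((v : ℝ) * (2 * Real.pi * ((i : ℕ) : ℝ) / (1 + 2 * (V : ℝ)) - α')))]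
    exact Finset.sum_congr rfl fun i _ => by rw [harg i]
  have hnd : a + ((1 + 2 * V : ℕ) : ℝ) * d - d / 2 = (a - d / 2) + (v : ℤ) * (2 * Real.pi) := by
    rw [hd]; push_cast; field_simp; ring
  have hz : Real.sin (a + ((1 + 2 * V : ℕ) : ℝ) * d - d / 2) = Real.sin (a - d / 2) := by
    rw [hnd]; exact Real.sin_add_int_mul_two_pi _ _
  rw [hz, sub_self] at key
  have hd2 : d / 2 = ((v : ℝ) / (1 + 2 * (V : ℝ))) * Real.pi := by rw [hd]; ring
  have hvR : (0 : ℝ) < (v : ℝ) := by exact_mod_cast hv1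
  have hvV : (v : ℝ) ≤ (V : ℝ) := by exact_mod_cast hv2
  have hts : Real.sin (d / 2) ≠ 0 := by
    rw [hd2]
    apply sin_ne_zero_of_frac
    · exact ne_of_gt (div_pos hvR hnR)
    · have : (0:ℝ) < (v : ℝ) / (1 + 2 * (V : ℝ)) := div_pos hvR hnR
      linarith
    · rw [div_lt_iff₀ hnR]; linarith
  rw [hstep]
  rcases mul_eq_zero.mp key with h1 | h1
  · exact h1
  · exfalso
    rcases mul_eq_zero.mp h1 with h2 | h2
    · norm_num at h2
    · exact hts h2

lemma coeff_identity (g m n t0 t s : ℝ)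
    (h1 : g + m ≠ 0) (h2 : t0 ≠ 0)
    (h3 : t0 / (g + m) * n + t ≠ 0)
    (h4 : t0 / (g + m) * (g - 1) * n + (t0 / (g + m) * n + t) ≠ 0)
    (h5 : (g + m) * (t / t0) + n * g ≠ 0)
    (h6 : (g + m) * (t / t0) + n ≠ 0) :
    (t0 * (g + 2 * s) / (g + m) -
        t0 / (g + m) * (g - 1) / (t0 / (g + m) * (g - 1) * n + (t0 / (g + m) * n + t)) *
          (t0 / (g + m) * n * g)) / (t0 / (g + m) * n + t)
      = g / ((g + m) * (t / t0) + n * g) + 2 / ((g + m) * (t / t0) + n) * s := by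
  have e4 : t0 / (g + m) * (g - 1) * n + (t0 / (g + m) * n + t) = t0 / (g + m) * n * g + t := by
    field_simp; ring
  rw [e4] at h4 ⊢
  have eA : g / ((g + m) * (t / t0) + n * g)
      = t0 / (g + m) * g / (t0 / (g + m) * n * g + t) := by
    rw [div_eq_div_iff h5 h4]
    field_simp
    ring
  have eB : (2:ℝ) / ((g + m) * (t / t0) + n)
      = 2 * (t0 / (g + m)) / (t0 / (g + m) * n + t) := by
    rw [div_eq_div_iff h6 h3]
    field_simp
    ring
  rw [eA, eB, show t0 * (g + 2 * s) / (g + m) = t0 / (g + m) * (g + 2 * s) by ring]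
  have hc : t0 / (g + m) ≠ 0 := div_ne_zero h2 h1
  generalize hcc : t0 / (g + m) = c at *
  field_simp
  have h4' : g * c * n + t ≠ 0 := by convert h4 using 1; ring
  field_simp
  ring

lemma dot_inv_mulVec (n : ℕ) (p q : ℝ) (hq : q ≠ 0) (hpq : p * n + q ≠ 0)
    (A : Matrix (Fin n) (Fin n) ℝ)
    (hA : ∀ w w', A w w' = p + q * (if w = w' then (1 : ℝ) else 0))
    (k y : Fin n → ℝ) :
    k ⬝ᵥ A⁻¹.mulVec y = ∑ w, ((k w - (p / (p * n + q)) * ∑ u, k u) / q) * y w := by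
  set β : ℝ := p / (p * n + q) with hβ
  set B : Matrix (Fin n) (Fin n) ℝ :=
    Matrix.of (fun w w' => ((if w = w' then (1 : ℝ) else 0) - β) / q) with hB
  have hAB : A * B = 1 := by
    ext w w''
    rw [Matrix.mul_apply]
    have h1 : ∀ w' : Fin n, A w w' * B w' w''
        = ((if w' = w'' then p / q else 0) + (-(p * β / q)))
          + (if w = w' then (if w' = w'' then (1 - β) else (0 - β)) else 0) := by
      intro w'
      rw [hA, hB]
      simp only [Matrix.of_apply]
      split_ifs <;> field_simp <;> ring
    rw [Finset.sum_congr rfl fun w' _ => h1 w']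
    rw [Finset.sum_add_distrib, Finset.sum_add_distrib,
      Finset.sum_ite_eq' Finset.univ w'' (fun _ => p / q),
      Finset.sum_ite_eq Finset.univ w (fun w' => if w' = w'' then (1 - β) else (0 - β)),
      Finset.sum_const, Finset.card_univ, Fintype.card_fin]
    rw [Matrix.one_apply]
    simp only [Finset.mem_univ, if_true, nsmul_eq_mul]
    rw [hβ]
    split_ifs with h
    · field_simp
      ring
    · field_simp
      ring
  rw [Matrix.inv_eq_right_inv hAB, Matrix.dotProduct_mulVec]
  have h2 : ∀ w' : Fin n, Matrix.vecMul k B w' = (k w' - β * ∑ u, k u) / q := by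
    intro w'
    simp only [Matrix.vecMul, dotProduct, hB, Matrix.of_apply]
    have h3 : ∀ w : Fin n, k w * (((if w = w' then (1 : ℝ) else 0) - β) / q)
        = (if w = w' then k w / q else 0) + (-(β / q)) * k w := by
      intro w; split_ifs <;> ring
    rw [Finset.sum_congr rfl fun w _ => h3 w, Finset.sum_add_distrib,
      Finset.sum_ite_eq' Finset.univ w' (fun w => k w / q), ← Finset.mul_sum]
    simp only [Finset.mem_univ, if_true]
    field_simp
    ring
  simp only [dotProduct]
  exact Finset.sum_congr rfl fun w' _ => by rw [h2 w']

/-- GP posterior mean with the VQE kernel at `1 + 2V` equidistant observations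
is a regularized discrete Fourier transform of the observations (Section A.2.2). -/
theorem posterior_mean_regularized_dft
    (V : ℕ) (hV : 1 ≤ V) (γ σ₀ σ : ℝ) (hγ : 0 < γ) (hσ₀ : 0 < σ₀) (hσ : 0 < σ)
    (y : Fin (1 + 2 * V) → ℝ) (α' : ℝ)
    (K : Matrix (Fin (1 + 2 * V)) (Fin (1 + 2 * V)) ℝ)
    (hK : ∀ w w' : Fin (1 + 2 * V),
      K w w' = σ₀ ^ 2 *
        (γ ^ 2 + 2 * ∑ v ∈ Finset.Icc 1 V,
          Real.cos ((v : ℝ) *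
            (2 * Real.pi * (w : ℕ) / (1 + 2 * V) - 2 * Real.pi * (w' : ℕ) / (1 + 2 * V)))) /
        (γ ^ 2 + 2 * V))
    (k' : Fin (1 + 2 * V) → ℝ)
    (hk' : ∀ w : Fin (1 + 2 * V),
      k' w = σ₀ ^ 2 *
        (γ ^ 2 + 2 * ∑ v ∈ Finset.Icc 1 V,
          Real.cos ((v : ℝ) * (2 * Real.pi * (w : ℕ) / (1 + 2 * V) - α'))) /
        (γ ^ 2 + 2 * V)) :
    k' ⬝ᵥ ((K + σ ^ 2 • (1 : Matrix (Fin (1 + 2 * V)) (Fin (1 + 2 * V)) ℝ))⁻¹).mulVec y =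
      (γ ^ 2 / ((γ ^ 2 + 2 * V) * (σ ^ 2 / σ₀ ^ 2) + (1 + 2 * V) * γ ^ 2)) * (∑ w, y w) +
      ∑ v ∈ Finset.Icc 1 V,
        ((1 / ((γ ^ 2 + 2 * V) * (σ ^ 2 / σ₀ ^ 2) + 1 + 2 * V)) *
            (∑ w, y w * (Real.sqrt 2 * Real.cos (2 * Real.pi * v * (w : ℕ) / (1 + 2 * V)))) *
            (Real.sqrt 2 * Real.cos ((v : ℝ) * α')) +
          (1 / ((γ ^ 2 + 2 * V) * (σ ^ 2 / σ₀ ^ 2) + 1 + 2 * V)) *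
            (∑ w, y w * (Real.sqrt 2 * Real.sin (2 * Real.pi * v * (w : ℕ) / (1 + 2 * V)))) *
            (Real.sqrt 2 * Real.sin ((v : ℝ) * α'))) := by
  have hπ := Real.pi_pos
  have hg2V : (0 : ℝ) < γ ^ 2 + 2 * (V : ℝ) := by positivity
  have hσ₀2 : (0 : ℝ) < σ₀ ^ 2 := pow_pos hσ₀ 2
  have hσ2 : (0 : ℝ) < σ ^ 2 := pow_pos hσ 2
  have hγ2 : (0 : ℝ) < γ ^ 2 := pow_pos hγ 2
  have hnRpos : (0 : ℝ) < 1 + 2 * (V : ℝ) := by positivity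
  -- parameters for the inversion lemma
  set p : ℝ := σ₀ ^ 2 / (γ ^ 2 + 2 * (V : ℝ)) * (γ ^ 2 - 1) with hp
  set q : ℝ := σ₀ ^ 2 / (γ ^ 2 + 2 * (V : ℝ)) * (1 + 2 * (V : ℝ)) + σ ^ 2 with hq'
  have hqpos : (0 : ℝ) < q := by
    rw [hq']; positivity
  have hq : q ≠ 0 := ne_of_gt hqpos
  have hpqval : p * ((1 + 2 * V : ℕ) : ℝ) + q
      = σ₀ ^ 2 * (1 + 2 * (V : ℝ)) * γ ^ 2 / (γ ^ 2 + 2 * (V : ℝ)) + σ ^ 2 := by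
    rw [hp, hq']; push_cast; field_simp; ring
  have hpqpos : (0 : ℝ) < p * ((1 + 2 * V : ℕ) : ℝ) + q := by
    rw [hpqval]; positivity
  have hpq : p * ((1 + 2 * V : ℕ) : ℝ) + q ≠ 0 := ne_of_gt hpqpos
  have hA : ∀ w w' : Fin (1 + 2 * V),
      (K + σ ^ 2 • (1 : Matrix (Fin (1 + 2 * V)) (Fin (1 + 2 * V)) ℝ)) w w'
        = p + q * (if w = w' then (1 : ℝ) else 0) := by
    intro w w'
    rw [Matrix.add_apply, Matrix.smul_apply, Matrix.one_apply, hK w w', cos_sum_delta, hp, hq']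
    simp only [smul_eq_mul]
    split_ifs
    · field_simp; ring
    · field_simp; ring
  have hSk : ∑ u, k' u = σ₀ ^ 2 / (γ ^ 2 + 2 * (V : ℝ)) * (1 + 2 * (V : ℝ)) * γ ^ 2 := by
    have h1 : ∀ w : Fin (1 + 2 * V), k' w
        = σ₀ ^ 2 / (γ ^ 2 + 2 * (V : ℝ)) * γ ^ 2
          + 2 * (σ₀ ^ 2 / (γ ^ 2 + 2 * (V : ℝ))) *
            (∑ v ∈ Finset.Icc 1 V,
              Real.cos ((v : ℝ) * (2 * Real.pi * ((w : ℕ) : ℝ) / (1 + 2 * (V : ℝ)) - α'))) := by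
      intro w; rw [hk' w]; ring
    rw [Finset.sum_congr rfl fun w _ => h1 w, Finset.sum_add_distrib, Finset.sum_const,
      Finset.card_univ, Fintype.card_fin]
    have h2 : ∑ w : Fin (1 + 2 * V), 2 * (σ₀ ^ 2 / (γ ^ 2 + 2 * (V : ℝ))) *
            (∑ v ∈ Finset.Icc 1 V,
              Real.cos ((v : ℝ) * (2 * Real.pi * ((w : ℕ) : ℝ) / (1 + 2 * (V : ℝ)) - α')))
        = 2 * (σ₀ ^ 2 / (γ ^ 2 + 2 * (V : ℝ))) * ∑ v ∈ Finset.Icc 1 V,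
            ∑ w : Fin (1 + 2 * V),
              Real.cos ((v : ℝ) * (2 * Real.pi * ((w : ℕ) : ℝ) / (1 + 2 * (V : ℝ)) - α')) := by
      simp only [Finset.mul_sum]
      exact Finset.sum_comm
    rw [h2, Finset.sum_congr rfl fun v hv =>
      cos_sum_zero V v (Finset.mem_Icc.mp hv).1 (Finset.mem_Icc.mp hv).2 α']
    simp only [Finset.sum_const_zero, mul_zero, add_zero, nsmul_eq_mul]
    push_cast
    ring
  rw [dot_inv_mulVec (1 + 2 * V) p q hq hpq _ hA k' y, hSk]
  -- rewrite the RHS as a single sum over w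
  have s2 : Real.sqrt 2 * Real.sqrt 2 = 2 := Real.mul_self_sqrt (by norm_num)
  have hv : ∀ v ∈ Finset.Icc 1 V,
      ((1 / ((γ ^ 2 + 2 * (V : ℝ)) * (σ ^ 2 / σ₀ ^ 2) + 1 + 2 * (V : ℝ))) *
            (∑ w, y w * (Real.sqrt 2 * Real.cos (2 * Real.pi * v * ((w : ℕ) : ℝ) / (1 + 2 * (V : ℝ))))) *
            (Real.sqrt 2 * Real.cos ((v : ℝ) * α')) +
          (1 / ((γ ^ 2 + 2 * (V : ℝ)) * (σ ^ 2 / σ₀ ^ 2) + 1 + 2 * (V : ℝ))) *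
            (∑ w, y w * (Real.sqrt 2 * Real.sin (2 * Real.pi * v * ((w : ℕ) : ℝ) / (1 + 2 * (V : ℝ))))) *
            (Real.sqrt 2 * Real.sin ((v : ℝ) * α')))
      = ∑ w : Fin (1 + 2 * V), y w *
          ((2 / ((γ ^ 2 + 2 * (V : ℝ)) * (σ ^ 2 / σ₀ ^ 2) + 1 + 2 * (V : ℝ))) *
            Real.cos ((v : ℝ) * (2 * Real.pi * ((w : ℕ) : ℝ) / (1 + 2 * (V : ℝ)) - α'))) := by
    intro v _
    rw [Finset.mul_sum, Finset.sum_mul, Finset.mul_sum, Finset.sum_mul, ← Finset.sum_add_distrib]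
    refine Finset.sum_congr rfl fun w _ => ?_
    rw [show (v : ℝ) * (2 * Real.pi * ((w : ℕ) : ℝ) / (1 + 2 * (V : ℝ)) - α')
        = 2 * Real.pi * (v : ℝ) * ((w : ℕ) : ℝ) / (1 + 2 * (V : ℝ)) - (v : ℝ) * α' by ring,
      Real.cos_sub]
    linear_combination (y w * (Real.cos (2 * Real.pi * (v : ℝ) * ((w : ℕ) : ℝ) / (1 + 2 * (V : ℝ))) *
        Real.cos ((v : ℝ) * α') + Real.sin (2 * Real.pi * (v : ℝ) * ((w : ℕ) : ℝ) / (1 + 2 * (V : ℝ))) *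
        Real.sin ((v : ℝ) * α')) / ((γ ^ 2 + 2 * (V : ℝ)) * (σ ^ 2 / σ₀ ^ 2) + 1 + 2 * (V : ℝ))) * s2
  rw [Finset.sum_congr rfl hv, Finset.sum_comm, Finset.mul_sum, ← Finset.sum_add_distrib]
  refine Finset.sum_congr rfl fun w _ => ?_
  have h4 : y w * ((2 / ((γ ^ 2 + 2 * (V : ℝ)) * (σ ^ 2 / σ₀ ^ 2) + 1 + 2 * (V : ℝ))) *
        ∑ v ∈ Finset.Icc 1 V,
          Real.cos ((v : ℝ) * (2 * Real.pi * ((w : ℕ) : ℝ) / (1 + 2 * (V : ℝ)) - α')))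
      = ∑ v ∈ Finset.Icc 1 V, y w *
          ((2 / ((γ ^ 2 + 2 * (V : ℝ)) * (σ ^ 2 / σ₀ ^ 2) + 1 + 2 * (V : ℝ))) *
            Real.cos ((v : ℝ) * (2 * Real.pi * ((w : ℕ) : ℝ) / (1 + 2 * (V : ℝ)) - α'))) := by
    rw [Finset.mul_sum, Finset.mul_sum]
  rw [hk' w, ← h4]
  have hE0 : (0 : ℝ) < (γ ^ 2 + 2 * (V : ℝ)) * (σ ^ 2 / σ₀ ^ 2) + (1 + 2 * (V : ℝ)) * γ ^ 2 := by
    positivity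
  have hE1 : (0 : ℝ) < (γ ^ 2 + 2 * (V : ℝ)) * (σ ^ 2 / σ₀ ^ 2) + 1 + 2 * (V : ℝ) := by
    positivity
  generalize (∑ v ∈ Finset.Icc 1 V,
      Real.cos ((v : ℝ) * (2 * Real.pi * ((w : ℕ) : ℝ) / (1 + 2 * (V : ℝ)) - α'))) = s
  have h1' : γ ^ 2 + 2 * (V : ℝ) ≠ 0 := ne_of_gt hg2V
  have h2' : σ₀ ^ 2 ≠ 0 := ne_of_gt hσ₀2
  have hq2 : σ₀ ^ 2 / (γ ^ 2 + 2 * (V : ℝ)) * (1 + 2 * (V : ℝ)) + σ ^ 2 ≠ 0 := by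
    rw [← hq']; exact hq
  have hpq2 : σ₀ ^ 2 / (γ ^ 2 + 2 * (V : ℝ)) * (γ ^ 2 - 1) * (1 + 2 * (V : ℝ)) +
      (σ₀ ^ 2 / (γ ^ 2 + 2 * (V : ℝ)) * (1 + 2 * (V : ℝ)) + σ ^ 2) ≠ 0 := by
    rw [← hp, ← hq', show (1 + 2 * (V : ℝ)) = ((1 + 2 * V : ℕ) : ℝ) by push_cast; ring]
    exact hpq
  have hE0' : (γ ^ 2 + 2 * (V : ℝ)) * (σ ^ 2 / σ₀ ^ 2) + (1 + 2 * (V : ℝ)) * γ ^ 2 ≠ 0 :=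
    ne_of_gt hE0
  have hE1' : (γ ^ 2 + 2 * (V : ℝ)) * (σ ^ 2 / σ₀ ^ 2) + (1 + 2 * (V : ℝ)) ≠ 0 := by
    positivity
  rw [hp, hq']
  push_cast
  linear_combination y w * coeff_identity (γ ^ 2) (2 * (V : ℝ)) (1 + 2 * (V : ℝ)) (σ₀ ^ 2)
    (σ ^ 2) s h1' h2' hq2 hpq2 hE0' hE1'
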